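/- Let α be a nonzero row vector in ℂⁿ, let b ∈ ℂ, let a = α·ᾱᵀ (so a = ‖α‖²), and for 1 ≤ j ≤ n let X_j be the sum of all j×j principal minors of the matrix I − (b/j)·αᵀ·ᾱ. Then X_j = C(n−1, j−1)·(1 − ab/j) + C(n−1, j) = C(n,j)·(n − ab)/n. In particular, X_j = 0 if and only if ab = n. -/

import Mathlib

open Complex

/-- The sum of all `j × j` principal minors of a square matrix `M`. -/
noncomputable def principalMinorSum {n : ℕ} (j : ℕ)
    (M : Matrix (Fin n) (Fin n) ℂ) : ℂ :=
  ∑ s ∈ Finset.univ.powersetCard j,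
    (M.submatrix (fun i : (s : Finset (Fin n)) => (i : Fin n))
      (fun i : (s : Finset (Fin n)) => (i : Fin n))).det

lemma aux_count (n j : ℕ) (hj1 : 1 ≤ j) (i : Fin n) :
    ((Finset.univ.powersetCard j).filter (fun s => i ∈ s)).card
      = Nat.choose (n-1) (j-1) := by
  have hc : ((Finset.univ.erase i).powersetCard (j-1)).card = (n-1).choose (j-1) := by
    rw [Finset.card_powersetCard, Finset.card_erase_of_mem (Finset.mem_univ i),
      Finset.card_univ, Fintype.card_fin]
  rw [← hc]
  refine Finset.card_bij (fun s _ => s.erase i) ?_ ?_ ?_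
  · intro s hs
    simp only [Finset.mem_filter, Finset.mem_powersetCard] at hs
    rw [Finset.mem_powersetCard]
    exact ⟨Finset.erase_subset_erase i hs.1.1,
      by rw [Finset.card_erase_of_mem hs.2, hs.1.2]⟩
  · intro s hs t ht h
    simp only [Finset.mem_filter] at hs ht
    rw [← Finset.insert_erase hs.2, h, Finset.insert_erase ht.2]
  · intro t ht
    rw [Finset.mem_powersetCard] at ht
    have hit : i ∉ t := fun h => (Finset.mem_erase.1 (ht.1 h)).1 rfl
    refine ⟨insert i t, ?_, by simp [hit]⟩
    simp only [Finset.mem_filter, Finset.mem_powersetCard]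
    refine ⟨⟨Finset.subset_univ _, ?_⟩, Finset.mem_insert_self _ _⟩
    rw [Finset.card_insert_of_notMem hit, ht.2]
    omega

lemma aux_det (n : ℕ) (c : ℂ) (α : Fin n → ℂ) (s : Finset (Fin n)) :
    (((1 : Matrix (Fin n) (Fin n) ℂ) -
        c • Matrix.of (fun k l => α k * (starRingEnd ℂ) (α l))).submatrix
      (fun i : (s : Finset (Fin n)) => (i : Fin n))
      (fun i : (s : Finset (Fin n)) => (i : Fin n))).det
    = 1 - c * ∑ i ∈ s, α i * (starRingEnd ℂ) (α i) := by
  have h1 : ((1 : Matrix (Fin n) (Fin n) ℂ) -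
        c • Matrix.of (fun k l => α k * (starRingEnd ℂ) (α l))).submatrix
      (fun i : (s : Finset (Fin n)) => (i : Fin n))
      (fun i : (s : Finset (Fin n)) => (i : Fin n))
      = 1 + Matrix.replicateCol Unit (fun i : (s : Finset (Fin n)) => -c * α i) *
          Matrix.replicateRow Unit (fun i : (s : Finset (Fin n)) => (starRingEnd ℂ) (α i)) := by
    ext i k
    simp [Matrix.submatrix_apply, Matrix.one_apply, Matrix.mul_apply,
      Subtype.coe_injective.eq_iff, sub_eq_add_neg]
    ring
  rw [h1, Matrix.det_one_add_replicateCol_mul_replicateRow]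
  rw [dotProduct]
  rw [← Finset.sum_coe_sort s (fun i => α i * (starRingEnd ℂ) (α i))]
  rw [Finset.mul_sum]
  rw [sub_eq_add_neg, ← Finset.sum_neg_distrib]
  exact congrArg (HAdd.hAdd 1) (Finset.sum_congr rfl fun i _ => by ring)

theorem principal_minor_sum_rank_one_perturbation
    (n : ℕ) (j : ℕ) (hj1 : 1 ≤ j) (hjn : j ≤ n)
    (α : Fin n → ℂ) (hα : α ≠ 0) (b : ℂ)
    (a : ℂ) (ha : a = ∑ k, α k * (starRingEnd ℂ) (α k))
    (X : ℂ)
    (hX : X = principalMinorSum j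
      ((1 : Matrix (Fin n) (Fin n) ℂ) -
        (b / (j : ℂ)) • Matrix.of (fun k l => α k * (starRingEnd ℂ) (α l)))) :
    X = (Nat.choose (n - 1) (j - 1) : ℂ) * (1 - a * b / (j : ℂ))
          + (Nat.choose (n - 1) j : ℂ)
      ∧ X = (Nat.choose n j : ℂ) * ((n : ℂ) - a * b) / (n : ℂ)
      ∧ (X = 0 ↔ a * b = (n : ℂ)) := by
  set g : Fin n → ℂ := fun i => α i * (starRingEnd ℂ) (α i) with hg
  -- key closed form
  have hdouble : ∑ s ∈ Finset.univ.powersetCard j, ∑ i ∈ s, g i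
      = (Nat.choose (n-1) (j-1) : ℂ) * a := by
    have h1 : ∀ s ∈ Finset.univ.powersetCard j, ∑ i ∈ s, g i
        = ∑ i : Fin n, if i ∈ s then g i else 0 := by
      intro s _
      rw [Finset.sum_ite_mem, Finset.univ_inter]
    rw [Finset.sum_congr rfl h1, Finset.sum_comm]
    have h2 : ∀ i : Fin n,
        ∑ s ∈ Finset.univ.powersetCard j, (if i ∈ s then g i else 0)
        = (Nat.choose (n-1) (j-1) : ℂ) * g i := by
      intro i
      rw [Finset.sum_ite, Finset.sum_const_zero, add_zero, Finset.sum_const,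
        aux_count n j hj1 i, nsmul_eq_mul]
    rw [Finset.sum_congr rfl (fun i _ => h2 i), ← Finset.mul_sum, ha]
  have hkey : X = (Nat.choose n j : ℂ)
      - (Nat.choose (n-1) (j-1) : ℂ) * a * (b / (j : ℂ)) := by
    rw [hX, principalMinorSum,
      Finset.sum_congr rfl (fun s _ => aux_det n (b / (j:ℂ)) α s),
      Finset.sum_sub_distrib, Finset.sum_const, Finset.card_powersetCard,
      Finset.card_univ, Fintype.card_fin, ← Finset.mul_sum, hdouble]
    simp [nsmul_eq_mul]
    ring
  have hn1 : 1 ≤ n := le_trans hj1 hjn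
  have hjne : (j : ℂ) ≠ 0 := Nat.cast_ne_zero.2 (by omega)
  have hnne : (n : ℂ) ≠ 0 := Nat.cast_ne_zero.2 (by omega)
  have hpascal : (Nat.choose (n-1) (j-1) : ℂ) + (Nat.choose (n-1) j : ℂ)
      = (Nat.choose n j : ℂ) := by
    have := Nat.choose_succ_succ (n-1) (j-1)
    have hn : n - 1 + 1 = n := by omega
    have hj : j - 1 + 1 = j := by omega
    rw [Nat.succ_eq_add_one, Nat.succ_eq_add_one, hn, hj] at this
    rw [← Nat.cast_add, ← this]
  have hmul : (n : ℂ) * (Nat.choose (n-1) (j-1) : ℂ)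
      = (Nat.choose n j : ℂ) * (j : ℂ) := by
    have := Nat.add_one_mul_choose_eq (n-1) (j-1)
    have hn : n - 1 + 1 = n := by omega
    have hj : j - 1 + 1 = j := by omega
    rw [hn, hj] at this
    rw [← Nat.cast_mul, ← Nat.cast_mul, this]
  have h2 : X = (Nat.choose n j : ℂ) * ((n : ℂ) - a * b) / (n : ℂ) := by
    rw [hkey]
    field_simp
    linear_combination (-(a * b)) * hmul
  refine ⟨?_, h2, ?_⟩
  · rw [hkey, ← hpascal]
    field_simp
    ring
  · have hcne : (Nat.choose n j : ℂ) ≠ 0 :=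
      Nat.cast_ne_zero.2 (Nat.choose_pos hjn).ne'
    rw [h2, div_eq_zero_iff, mul_eq_zero]
    constructor
    · rintro (h | h)
      · rcases h with h | h
        · exact absurd h hcne
        · exact (sub_eq_zero.1 h).symm
      · exact absurd h hnne
    · intro h
      left; right
      rw [h, sub_self]
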